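/- For every p ≥ 1, the partition of positions {1,...,(k+1)m} into p-segments of X^p refines the partition into (p-1)-segments of X^{p-1}: every p-segment of X^p is contained in some (p-1)-segment of X^{p-1} (after identifying the multisets of suffixes in corresponding intervals). -/

import Mathlib

open scoped Classical

/-- Symbol type for suffixes: ranked sentinels (ordered by (suffix length, string index))
below all regular alphabet symbols. -/
abbrev SSym (A : Type*) := (ℕ ×ₗ ℕ) ⊕ₗ A

variable {A : Type*} [LinearOrder A] {m k : ℕ}

/-- `symAt s (q, l) t` is the `t`-th symbol (0-indexed) of the `l`-suffix of the
string `s q` (a string of length `k`), padded beyond its end with its own ranked sentinel. -/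
def symAt (s : Fin m → Fin k → A) (o : Fin m × Fin (k+1)) (t : ℕ) : SSym A :=
  if _h : t < (o.2 : ℕ) then
    toLex (Sum.inr (s o.1 ⟨k - (o.2 : ℕ) + t, by have := o.2.isLt; omega⟩))
  else
    toLex (Sum.inl (toLex ((o.2 : ℕ), (o.1 : ℕ))))

/-- The `p`-prefix of the suffix occurrence `o`. -/
def pprefix (s : Fin m → Fin k → A) (p : ℕ) (o : Fin m × Fin (k+1)) : List (SSym A) :=
  List.ofFn fun t : Fin p => symAt s o t

/-- The full suffix string of occurrence `o` (its `l` symbols followed by its sentinel). -/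
def suffStr (s : Fin m → Fin k → A) (o : Fin m × Fin (k+1)) : List (SSym A) :=
  List.ofFn fun t : Fin ((o.2 : ℕ) + 1) => symAt s o t

/-- The order `≺_p`: compare `p`-prefixes lexicographically, then suffix lengths,
then string indices. -/
def precP (s : Fin m → Fin k → A) (p : ℕ) (α β : Fin m × Fin (k+1)) : Prop :=
  List.Lex (· < ·) (pprefix s p α) (pprefix s p β) ∨
    (pprefix s p α = pprefix s p β ∧
      ((α.2 : ℕ) < (β.2 : ℕ) ∨ ((α.2 : ℕ) = (β.2 : ℕ) ∧ (α.1 : ℕ) < (β.1 : ℕ))))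

/-- Full lexicographic order on suffix occurrences, ties broken by length then string index. -/
def fullOrd (s : Fin m → Fin k → A) (α β : Fin m × Fin (k+1)) : Prop :=
  List.Lex (· < ·) (suffStr s α) (suffStr s β) ∨
    (suffStr s α = suffStr s β ∧
      ((α.2 : ℕ) < (β.2 : ℕ) ∨ ((α.2 : ℕ) = (β.2 : ℕ) ∧ (α.1 : ℕ) < (β.1 : ℕ))))

/-- `[b,e]` is the `p`-segment of position `i` in the sorted array `X`:
a position `j` carries the same `p`-prefix as position `i` iff `b ≤ j ≤ e`. -/
def isSeg (s : Fin m → Fin k → A) (p : ℕ) {n : ℕ}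
    (X : Fin n → Fin m × Fin (k+1)) (b e i : Fin n) : Prop :=
  b ≤ i ∧ i ≤ e ∧ ∀ j, (pprefix s p (X j) = pprefix s p (X i) ↔ b ≤ j ∧ j ≤ e)

/-- Position `i` is the start of its `p`-segment in the sorted array `X`. -/
def isStart (s : Fin m → Fin k → A) (p : ℕ) {n : ℕ}
    (X : Fin n → Fin m × Fin (k+1)) (i : Fin n) : Prop :=
  ∀ j, j < i → pprefix s p (X j) ≠ pprefix s p (X i)

set_option linter.unusedSectionVars false in
lemma pprefix_eq_of_le (s : Fin m → Fin k → A) {q p : ℕ} (hqp : q ≤ p)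
    {α β : Fin m × Fin (k+1)} (h : pprefix s p α = pprefix s p β) :
    pprefix s q α = pprefix s q β := by
  simp only [pprefix, List.ofFn_inj] at h ⊢
  funext t
  simpa using congrFun h ⟨t, lt_of_lt_of_le t.isLt hqp⟩

set_option linter.unusedSectionVars false in
lemma lex_append_of_length_eq {γ : Type*} {r : γ → γ → Prop} {l₁ l₂ : List γ}
    (t₁ t₂ : List γ) (h : List.Lex r l₁ l₂) (hlen : l₁.length = l₂.length) :
    List.Lex r (l₁ ++ t₁) (l₂ ++ t₂) := by
  induction h with
  | nil => simp at hlen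
  | cons h ih => exact List.Lex.cons (ih (by simpa using hlen))
  | rel h => exact List.Lex.rel h

set_option linter.unusedSectionVars false in
lemma pprefix_add (s : Fin m → Fin k → A) (q r : ℕ) (α : Fin m × Fin (k+1)) :
    pprefix s (q + r) α
      = pprefix s q α ++ List.ofFn (fun t : Fin r => symAt s α (q + (t : ℕ))) := by
  simp [pprefix, List.ofFn_add]

set_option linter.unusedSectionVars false in
lemma pprefix_lex_mono (s : Fin m → Fin k → A) {q p : ℕ} (hqp : q ≤ p)
    {α β : Fin m × Fin (k+1)}
    (h : List.Lex (· < ·) (pprefix s q α) (pprefix s q β)) :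
    List.Lex (· < ·) (pprefix s p α) (pprefix s p β) := by
  obtain ⟨r, rfl⟩ := Nat.exists_eq_add_of_le hqp
  rw [pprefix_add, pprefix_add]
  exact lex_append_of_length_eq _ _ h (by simp [pprefix])


/-- For every `p ≥ 1`, the partition of positions into `p`-segments of
`X^p` refines the partition into `(p-1)`-segments of `X^{p-1}`: every `p`-segment of
`X^p` is contained in some `(p-1)`-segment of `X^{p-1}`. -/
theorem pSegments_refine (s : Fin m → Fin k → A) (p : ℕ) (hp : 1 ≤ p)
    (Xprev Xcur : Fin ((k + 1) * m) → Fin m × Fin (k + 1))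
    (hbij1 : Function.Bijective Xprev)
    (hsort1 : ∀ i j, i < j → precP s (p - 1) (Xprev i) (Xprev j))
    (hbij2 : Function.Bijective Xcur)
    (hsort2 : ∀ i j, i < j → precP s p (Xcur i) (Xcur j)) :
    ∀ b e i, isSeg s p Xcur b e i →
      ∃ b' e', isSeg s (p - 1) Xprev b' e' b' ∧ b' ≤ b ∧ e ≤ e' := by
  classical
  intro b e i hseg
  obtain ⟨hbi, hie, hmem⟩ := hseg
  set F : (Fin m × Fin (k+1)) → List (SSym A) := pprefix s (p-1) with hF
  -- monotonicity of the (p-1)-prefixes along both arrays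
  have mono1 : Monotone (F ∘ Xprev) := by
    intro i j hij
    rcases lt_or_eq_of_le hij with h | h
    · rcases hsort1 i j h with h' | h'
      · exact le_of_lt h'
      · exact le_of_eq h'.1
    · exact le_of_eq (by rw [h])
  have mono2 : Monotone (F ∘ Xcur) := by
    intro i j hij
    rcases lt_or_eq_of_le hij with h | h
    · rcases hsort2 i j h with h' | h'
      · rcases lt_trichotomy (F (Xcur i)) (F (Xcur j)) with h'' | h'' | h''
        · exact le_of_lt h''
        · exact le_of_eq h''
        · have hlt : pprefix s p (Xcur j) < pprefix s p (Xcur i) :=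
            pprefix_lex_mono s (Nat.sub_le p 1) h''
          have hlt' : pprefix s p (Xcur i) < pprefix s p (Xcur j) := h'
          exact absurd hlt (lt_asymm hlt')
      · exact le_of_eq (pprefix_eq_of_le s (Nat.sub_le p 1) h'.1)
    · exact le_of_eq (by rw [h])
  -- the two sequences of (p-1)-prefixes agree pointwise
  have heq : ∀ j, F (Xprev j) = F (Xcur j) := by
    set e1 := Equiv.ofBijective _ hbij1 with he1
    set e2 := Equiv.ofBijective _ hbij2 with he2
    have hcomp : F ∘ Xprev = (F ∘ Xcur) ∘ (e1.trans e2.symm) := by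
      funext j
      show F (Xprev j) = F (Xcur (e2.symm (e1 j)))
      have h2 : Xcur (e2.symm (e1 j)) = e2 (e2.symm (e1 j)) := rfl
      rw [h2, e2.apply_symm_apply]
      rfl
    have hperm : List.Perm (List.ofFn (F ∘ Xprev)) (List.ofFn (F ∘ Xcur)) := by
      rw [hcomp]
      exact Equiv.Perm.ofFn_comp_perm (e1.trans e2.symm) (F ∘ Xcur)
    have h1 : List.ofFn (F ∘ Xprev) = List.ofFn (F ∘ Xcur) :=
      List.Perm.eq_of_sortedLE mono1.sortedLE_ofFn mono2.sortedLE_ofFn hperm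
    intro j
    exact congrFun (List.ofFn_inj.mp h1) j
  -- the (p-1)-segment of Xprev containing b
  set T : Finset (Fin ((k+1)*m)) :=
    Finset.univ.filter (fun j => F (Xprev j) = F (Xprev b)) with hT
  have hbT : b ∈ T := by simp [hT]
  have hne : T.Nonempty := ⟨b, hbT⟩
  have hminT : T.min' hne ∈ T := T.min'_mem hne
  have hmaxT : T.max' hne ∈ T := T.max'_mem hne
  have hmin_eq : F (Xprev (T.min' hne)) = F (Xprev b) := by
    simpa [hT] using hminT
  have hmax_eq : F (Xprev (T.max' hne)) = F (Xprev b) := by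
    simpa [hT] using hmaxT
  have hinterval : ∀ j, T.min' hne ≤ j → j ≤ T.max' hne → F (Xprev j) = F (Xprev b) := by
    intro j h1 h2
    have lo : F (Xprev (T.min' hne)) ≤ F (Xprev j) := mono1 h1
    have hi : F (Xprev j) ≤ F (Xprev (T.max' hne)) := mono1 h2
    rw [hmin_eq] at lo
    rw [hmax_eq] at hi
    exact le_antisymm hi lo
  refine ⟨T.min' hne, T.max' hne, ⟨le_refl _, T.min'_le _ hmaxT, ?_⟩, T.min'_le b hbT, ?_⟩
  · intro j
    constructor
    · intro hj
      have : F (Xprev j) = F (Xprev b) := hj.trans hmin_eq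
      have hjT : j ∈ T := by simp [hT, this]
      exact ⟨T.min'_le _ hjT, T.le_max' _ hjT⟩
    · rintro ⟨h1, h2⟩
      show F (Xprev j) = F (Xprev (T.min' hne))
      rw [hmin_eq]
      exact hinterval j h1 h2
  · -- e ≤ max'
    have hbe : b ≤ e := le_trans hbi hie
    have h1 : pprefix s p (Xcur e) = pprefix s p (Xcur i) := (hmem e).mpr ⟨hbe, le_refl e⟩
    have h2 : pprefix s p (Xcur b) = pprefix s p (Xcur i) := (hmem b).mpr ⟨le_refl b, hbe⟩
    have h3 : pprefix s p (Xcur e) = pprefix s p (Xcur b) := h1.trans h2.symm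
    have h4 : F (Xcur e) = F (Xcur b) := pprefix_eq_of_le s (Nat.sub_le p 1) h3
    have heT : e ∈ T := by
      simp only [hT, Finset.mem_filter, Finset.mem_univ, true_and]
      rw [heq e, heq b]
      exact h4
    exact T.le_max' e heT
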